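/- Let S be a convex cost process, D a convex portfolio constraint process, and C the set of claim processes superhedgeable with zero cost. Assume C is a cone and C is closed in probability, and let D^∞ := {y ∈ M^∞ | E ∑_{t=0}^T c_t y_t ≤ 0 for all c ∈ C¹} be the polar cone of C¹. Then for every integrable claim process c ∈ M^1: c ∈ C if and only if E ∑_{t=0}^T c_t y_t ≤ 0 for every y ∈ D^∞. -/

import Mathlib

open MeasureTheory Filter Topology
open scoped ENNReal NNReal

set_option maxHeartbeats 1000000
set_option synthInstance.maxHeartbeats 1000000

noncomputable section

/-- The portfolio held before time `t`, with the convention `x₋₁ = 0`. -/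
def prevP {Ω : Type*} {T : ℕ} {E : Type*} [Zero E]
    (x : Fin (T + 1) → Ω → E) (t : Fin (T + 1)) : Ω → E :=
  if t.1 = 0 then 0 else x ⟨t.1 - 1, lt_of_le_of_lt (Nat.sub_le _ _) t.isLt⟩

/-- The recession cone of a set in a real vector space. -/
def rcone {V : Type*} [AddCommMonoid V] [SMul ℝ V] (A : Set V) : Set V :=
  {y | ∀ a ∈ A, ∀ α : ℝ, 0 < α → a + α • y ∈ A}

section Dual
variable {Ω : Type*} {m0 : MeasurableSpace Ω}

/-- Inclusion of `L²` into `L¹` as a continuous linear map (probability measure). -/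
def L2toL1 (P : Measure Ω) [IsProbabilityMeasure P] : Lp ℝ 2 P →L[ℝ] Lp ℝ 1 P := by
  refine LinearMap.mkContinuous
    { toFun := fun v => ((Lp.memLp v).mono_exponent (by norm_num)).toLp v
      map_add' := ?_
      map_smul' := ?_ } 1 ?_
  · intro v w
    refine Lp.ext ?_
    filter_upwards [MemLp.coeFn_toLp ((Lp.memLp (v+w)).mono_exponent (by norm_num : (1:ℝ≥0∞) ≤ 2)),
      MemLp.coeFn_toLp ((Lp.memLp v).mono_exponent (by norm_num : (1:ℝ≥0∞) ≤ 2)),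
      MemLp.coeFn_toLp ((Lp.memLp w).mono_exponent (by norm_num : (1:ℝ≥0∞) ≤ 2)),
      Lp.coeFn_add v w,
      Lp.coeFn_add (((Lp.memLp v).mono_exponent (by norm_num : (1:ℝ≥0∞) ≤ 2)).toLp v)
        (((Lp.memLp w).mono_exponent (by norm_num : (1:ℝ≥0∞) ≤ 2)).toLp w)]
      with ω h1 h2 h3 h4 h5
    simp only [Pi.add_apply] at h4 h5
    rw [h1, h4, h5, h2, h3]
  · intro a v
    refine Lp.ext ?_
    filter_upwards [MemLp.coeFn_toLp ((Lp.memLp (a • v)).mono_exponent (by norm_num : (1:ℝ≥0∞) ≤ 2)),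
      MemLp.coeFn_toLp ((Lp.memLp v).mono_exponent (by norm_num : (1:ℝ≥0∞) ≤ 2)),
      Lp.coeFn_smul a v,
      Lp.coeFn_smul a (((Lp.memLp v).mono_exponent (by norm_num : (1:ℝ≥0∞) ≤ 2)).toLp v)]
      with ω h1 h2 h3 h4
    simp only [RingHom.id_apply, Pi.smul_apply, smul_eq_mul] at *
    rw [h1, h3, h4, h2]
  · intro v
    rw [one_mul]
    refine le_trans (le_of_eq (Lp.norm_toLp (v : Ω → ℝ)
      ((Lp.memLp v).mono_exponent (by norm_num : (1:ℝ≥0∞) ≤ 2)))) ?_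
    rw [Lp.norm_def]
    exact ENNReal.toReal_mono (Lp.eLpNorm_ne_top v)
      (eLpNorm_le_eLpNorm_of_exponent_le (by norm_num) (Lp.aestronglyMeasurable v))

theorem L2toL1_coeFn (P : Measure Ω) [IsProbabilityMeasure P] (v : Lp ℝ 2 P) :
    (L2toL1 P v : Ω → ℝ) =ᵐ[P] v :=
  MemLp.coeFn_toLp ((Lp.memLp v).mono_exponent (by norm_num))

/-- Riesz-type representation of continuous linear functionals on `L¹` of a probability
space by bounded measurable functions. -/
theorem l1_dual_repr (P : Measure Ω) [IsProbabilityMeasure P] (g : Lp ℝ 1 P →L[ℝ] ℝ) :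
    ∃ y : Ω → ℝ, Measurable y ∧ (∀ ω, |y ω| ≤ ‖g‖ + 1) ∧
      ∀ (v : Ω → ℝ) (hv : Integrable v P), g (hv.toL1 v) = ∫ ω, v ω * y ω ∂P := by
  classical
  set φ : Lp ℝ 2 P →L[ℝ] ℝ := g.comp (L2toL1 P) with hφ
  set G : Lp ℝ 2 P := (InnerProductSpace.toDual ℝ (Lp ℝ 2 P)).symm φ with hG
  have hGapp : ∀ v : Lp ℝ 2 P, ∫ ω, (G : Ω → ℝ) ω * (v : Ω → ℝ) ω ∂P = φ v := by
    intro v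
    have := InnerProductSpace.toDual_symm_apply (𝕜 := ℝ) (E := Lp ℝ 2 P) (x := v) (y := φ)
    rw [← hG] at this
    rw [← this, L2.inner_def]
    simp [RCLike.inner_apply]
    exact integral_congr_ae (Eventually.of_forall fun ω => mul_comm _ _)
  set g0 : Ω → ℝ := (G : Ω → ℝ) with hg0
  have hg0m : Measurable g0 := (Lp.stronglyMeasurable G).measurable
  -- the representative is a.e. bounded by ‖g‖ + 1
  set A : Set Ω := {ω | ‖g‖ + 1 ≤ |g0 ω|} with hA
  have hAm : MeasurableSet A := measurableSet_le measurable_const hg0m.abs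
  have hGint : Integrable g0 P :=
    memLp_one_iff_integrable.1 ((Lp.memLp G).mono_exponent (by norm_num))
  have hPA : P A = 0 := by
    set s : Ω → ℝ := fun ω => if 0 ≤ g0 ω then 1 else -1 with hs
    have hsm : Measurable s := Measurable.ite (measurableSet_le measurable_const hg0m)
      measurable_const measurable_const
    set v : Ω → ℝ := A.indicator s with hv
    have hvm : Measurable v := hsm.indicator hAm
    have hvb : ∀ ω, ‖v ω‖ ≤ 1 := by
      intro ω
      rw [hv]; unfold s
      by_cases h : ω ∈ A <;> simp [Set.indicator, h] <;> split <;> norm_num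
    have hv2 : MemLp v 2 P :=
      (memLp_top_of_bound hvm.aestronglyMeasurable 1
        (Eventually.of_forall hvb)).mono_exponent le_top
    -- value of φ on v
    have hkey : φ (hv2.toLp v) = ∫ ω, g0 ω * v ω ∂P := (hGapp _).symm.trans
      (integral_congr_ae (by filter_upwards [hv2.coeFn_toLp] with ω h; rw [h]))
    -- lower bound
    have hprod : ∀ ω, g0 ω * v ω = A.indicator (fun ω => |g0 ω|) ω := by
      intro ω
      by_cases h : ω ∈ A
      · simp only [hv, Set.indicator_of_mem h, hs]
        split_ifs with h'
        · rw [mul_one, abs_of_nonneg h']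
        · push_neg at h'; rw [abs_of_neg h']; ring
      · simp [hv, Set.indicator_of_notMem h]
    have hlow : (‖g‖ + 1) * (P A).toReal ≤ ∫ ω, g0 ω * v ω ∂P := by
      rw [integral_congr_ae (Eventually.of_forall hprod), integral_indicator hAm]
      refine setIntegral_ge_of_const_le_real hAm (measure_ne_top _ _) (fun ω hω => hω) ?_
      exact hGint.abs.integrableOn
    -- upper bound
    have hnorm : ‖L2toL1 P (hv2.toLp v)‖ ≤ (P A).toReal := by
      rw [Lp.norm_def]
      have : eLpNorm (L2toL1 P (hv2.toLp v) : Ω → ℝ) 1 P = eLpNorm v 1 P := by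
        refine eLpNorm_congr_ae (((L2toL1_coeFn P _)).trans hv2.coeFn_toLp)
      rw [this, eLpNorm_one_eq_lintegral_enorm]
      have hb : ∀ ω, (‖v ω‖₊ : ℝ≥0∞) ≤ A.indicator (fun _ => 1) ω := by
        intro ω
        by_cases h : ω ∈ A
        · simp only [Set.indicator_of_mem h]
          simpa using ENNReal.coe_le_one_iff.2 (by exact_mod_cast hvb ω)
        · simp [hv, Set.indicator_of_notMem h]
      calc (∫⁻ ω, (‖v ω‖₊ : ℝ≥0∞) ∂P).toReal
          ≤ (∫⁻ ω, A.indicator (fun _ => 1) ω ∂P).toReal := by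
            refine ENNReal.toReal_mono ?_ (lintegral_mono hb)
            rw [lintegral_indicator hAm _]
            simp [measure_ne_top]
        _ = (P A).toReal := by rw [lintegral_indicator hAm _]; simp
    have hup : φ (hv2.toLp v) ≤ ‖g‖ * (P A).toReal := by
      calc φ (hv2.toLp v) = g (L2toL1 P (hv2.toLp v)) := rfl
        _ ≤ ‖g (L2toL1 P (hv2.toLp v))‖ := le_abs_self _
        _ ≤ ‖g‖ * ‖L2toL1 P (hv2.toLp v)‖ := g.le_opNorm _
        _ ≤ ‖g‖ * (P A).toReal :=
            mul_le_mul_of_nonneg_left hnorm (norm_nonneg _)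
    have : (‖g‖ + 1) * (P A).toReal ≤ ‖g‖ * (P A).toReal := by
      calc (‖g‖ + 1) * (P A).toReal ≤ ∫ ω, g0 ω * v ω ∂P := hlow
        _ = φ (hv2.toLp v) := hkey.symm
        _ ≤ ‖g‖ * (P A).toReal := hup
    have hx : (P A).toReal = 0 := by nlinarith [ENNReal.toReal_nonneg (a := P A)]
    exact ((ENNReal.toReal_eq_zero_iff _).1 hx).resolve_right (measure_ne_top P A)
  -- the truncated representative
  set y : Ω → ℝ := fun ω => if |g0 ω| ≤ ‖g‖ + 1 then g0 ω else 0 with hy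
  have hym : Measurable y :=
    Measurable.ite (measurableSet_le hg0m.abs measurable_const) hg0m measurable_const
  have hyb : ∀ ω, |y ω| ≤ ‖g‖ + 1 := by
    intro ω
    rw [hy]
    simp only []
    split_ifs with h
    · exact h
    · simp only [abs_zero]
      positivity
  have hyae : y =ᵐ[P] g0 := by
    have hsub : {ω | y ω ≠ g0 ω} ⊆ A := by
      intro ω hω
      by_contra hmem
      apply hω
      rw [hA, Set.mem_setOf_eq, not_le] at hmem
      show (if |g0 ω| ≤ ‖g‖ + 1 then g0 ω else 0) = g0 ω
      rw [if_pos hmem.le]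
    exact (measure_mono_null hsub hPA : P {ω | y ω ≠ g0 ω} = 0)
  refine ⟨y, hym, hyb, ?_⟩
  -- both sides are continuous on L¹ and agree on simple functions
  have hbd : ∀ w : Lp ℝ 1 P, Integrable (fun ω => (w : Ω → ℝ) ω * y ω) P := by
    intro w
    have := Integrable.bdd_mul (c := ‖g‖ + 1) (L1.integrable_coeFn w)
      hym.aestronglyMeasurable
      (Eventually.of_forall (fun ω => by rw [Real.norm_eq_abs]; exact hyb ω))
    exact this.congr (Eventually.of_forall (fun ω => mul_comm _ _))
  have hΨcont : Continuous (fun w : Lp ℝ 1 P => ∫ ω, (w : Ω → ℝ) ω * y ω ∂P) := by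
    have hlip : LipschitzWith (Real.toNNReal (‖g‖ + 1))
        (fun w : Lp ℝ 1 P => ∫ ω, (w : Ω → ℝ) ω * y ω ∂P) := by
      refine LipschitzWith.of_dist_le_mul ?_
      intro w w'
      rw [Real.dist_eq, dist_eq_norm]
      have h1 : ∫ ω, (w : Ω → ℝ) ω * y ω ∂P - ∫ ω, (w' : Ω → ℝ) ω * y ω ∂P
          = ∫ ω, ((w : Ω → ℝ) ω - (w' : Ω → ℝ) ω) * y ω ∂P := by
        rw [← integral_sub (hbd w) (hbd w')]
        congr 1
        ext ω
        ring
      rw [h1]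
      calc |∫ ω, ((w : Ω → ℝ) ω - (w' : Ω → ℝ) ω) * y ω ∂P|
          ≤ ∫ ω, |(w : Ω → ℝ) ω - (w' : Ω → ℝ) ω| * |y ω| ∂P := by
            have := norm_integral_le_integral_norm
              (fun ω => ((w : Ω → ℝ) ω - (w' : Ω → ℝ) ω) * y ω) (μ := P)
            simpa [Real.norm_eq_abs, abs_mul] using this
        _ ≤ ∫ ω, |(w : Ω → ℝ) ω - (w' : Ω → ℝ) ω| * (‖g‖ + 1) ∂P := by
            refine integral_mono_of_nonneg
              (Eventually.of_forall (fun ω => by positivity))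
              (((L1.integrable_coeFn w).sub (L1.integrable_coeFn w')).abs.mul_const _) ?_
            refine Eventually.of_forall (fun ω => ?_)
            exact mul_le_mul_of_nonneg_left (hyb ω) (abs_nonneg _)
        _ = (‖g‖ + 1) * ∫ ω, |(w : Ω → ℝ) ω - (w' : Ω → ℝ) ω| ∂P := by
            rw [integral_mul_const, mul_comm]
        _ = (‖g‖ + 1) * ‖w - w'‖ := by
            rw [L1.norm_eq_integral_norm]
            congr 1
            refine integral_congr_ae ?_
            filter_upwards [Lp.coeFn_sub w w'] with ω hω
            rw [Real.norm_eq_abs, hω, Pi.sub_apply]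
        _ ≤ (Real.toNNReal (‖g‖ + 1) : ℝ) * dist w w' := by
            rw [dist_eq_norm]
            refine mul_le_mul_of_nonneg_right ?_ (norm_nonneg _)
            exact le_of_eq (Real.coe_toNNReal _ (by positivity)).symm
      rw [dist_eq_norm]
    exact hlip.continuous
  have heq : (fun w : Lp ℝ 1 P => g w) = fun w : Lp ℝ 1 P => ∫ ω, (w : Ω → ℝ) ω * y ω ∂P := by
    refine Continuous.ext_on (Lp.simpleFunc.denseRange (E := ℝ) (μ := P)
      (p := 1) ENNReal.one_ne_top) g.continuous hΨcont ?_
    rintro _ ⟨q, rfl⟩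
    set u := Lp.simpleFunc.toSimpleFunc q with hu
    have huq : (q : Lp ℝ 1 P) =ᵐ[P] u := (Lp.simpleFunc.toSimpleFunc_eq_toFun q).symm
    obtain ⟨C, hC⟩ : ∃ C, ∀ ω, ‖u ω‖ ≤ C := by
      obtain ⟨C, hC⟩ := (u.map (fun r => ‖r‖)).exists_forall_le
      exact ⟨C, fun ω => hC ω⟩
    have hu2 : MemLp (u : Ω → ℝ) 2 P :=
      (memLp_top_of_bound u.stronglyMeasurable.aestronglyMeasurable C
        (Eventually.of_forall hC)).mono_exponent le_top
    have hincl : L2toL1 P (hu2.toLp u) = (q : Lp ℝ 1 P) := by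
      refine Lp.ext ?_
      exact ((L2toL1_coeFn P _).trans (hu2.coeFn_toLp)).trans huq.symm
    calc g (q : Lp ℝ 1 P) = φ (hu2.toLp u) := by rw [hφ]; simp [hincl]
      _ = ∫ ω, g0 ω * (hu2.toLp u : Ω → ℝ) ω ∂P := (hGapp _).symm
      _ = ∫ ω, ((q : Lp ℝ 1 P) : Ω → ℝ) ω * y ω ∂P := by
          refine integral_congr_ae ?_
          filter_upwards [hu2.coeFn_toLp, huq, hyae] with ω h1 h2 h3
          rw [h1, ← h2, h3, mul_comm]
  intro v hv
  have := congrFun heq (hv.toL1 v)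
  rw [this]
  refine integral_congr_ae ?_
  filter_upwards [hv.coeFn_toL1] with ω hω
  rw [hω]


/-- Replacing a bounded function by its conditional expectation in a pairing against an
`m`-measurable integrable function does not change the integral. -/
theorem integral_mul_condexp_eq (P : Measure Ω) [IsProbabilityMeasure P]
    {m : MeasurableSpace Ω} (hm : m ≤ m0) {c y : Ω → ℝ}
    (hc : StronglyMeasurable[m] c) (hci : Integrable c P)
    (hym : AEStronglyMeasurable[m0] y P) {Cb : ℝ} (hyb : ∀ᵐ ω ∂P, ‖y ω‖ ≤ Cb) :
    ∫ ω, c ω * (P[y | m]) ω ∂P = ∫ ω, c ω * y ω ∂P := by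
  haveI : IsFiniteMeasure (P.trim hm) := isFiniteMeasure_trim hm
  haveI : SigmaFinite (P.trim hm) := inferInstance
  have hyi : Integrable y P :=
    (memLp_top_of_bound hym Cb hyb).integrable le_top
  have hcyi : Integrable (c * y) P := by
    have := Integrable.bdd_mul (c := Cb) hci hym hyb
    exact this.congr (Eventually.of_forall (fun ω => mul_comm _ _))
  have hpull := condExp_mul_of_stronglyMeasurable_left (μ := P) (m := m) hc hcyi hyi
  calc ∫ ω, c ω * (P[y | m]) ω ∂P = ∫ ω, (c * P[y | m]) ω ∂P := rfl
    _ = ∫ ω, (P[c * y | m]) ω ∂P := (integral_congr_ae hpull).symm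
    _ = ∫ ω, (c * y) ω ∂P := integral_condExp hm
    _ = ∫ ω, c ω * y ω ∂P := rfl



theorem tendstoInMeasure_const {P : Measure Ω} (f : Ω → ℝ) :
    TendstoInMeasure P (fun _ : ℕ => f) atTop f := by
  intro ε hε
  have h : ∀ n : ℕ, P {x | ε ≤ edist (f x) (f x)} = 0 := by
    intro n
    have : {x | ε ≤ edist (f x) (f x)} = ∅ := by
      ext x; simp [edist_self, not_le.2 hε]
    rw [this]; exact measure_empty
  rw [show (fun _ : ℕ => P {x | ε ≤ edist (f x) (f x)}) = fun _ => (0 : ℝ≥0∞) from funext h]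
  exact tendsto_const_nhds

/-- The `t`-th component of a continuous linear functional on a finite product. -/
def compCLM {n : ℕ} {F : Type*} [NormedAddCommGroup F] [NormedSpace ℝ F]
    (f : (Fin n → F) →L[ℝ] ℝ) (t : Fin n) : F →L[ℝ] ℝ :=
  LinearMap.mkContinuous
    (f.toLinearMap.comp (LinearMap.single ℝ (fun _ : Fin n => F) t)) ‖f‖
    (fun v => by
      have h1 : ‖(Pi.single t v : Fin n → F)‖ ≤ ‖v‖ := by
        refine (pi_norm_le_iff_of_nonneg (norm_nonneg v)).2 (fun i => ?_)
        rcases eq_or_ne i t with rfl | hne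
        · simp
        · simp [Pi.single_eq_of_ne hne]
      calc ‖f.toLinearMap.comp (LinearMap.single ℝ (fun _ : Fin n => F) t) v‖
          = ‖f (Pi.single t v)‖ := rfl
        _ ≤ ‖f‖ * ‖(Pi.single t v : Fin n → F)‖ := f.le_opNorm _
        _ ≤ ‖f‖ * ‖v‖ := mul_le_mul_of_nonneg_left h1 (norm_nonneg f))

theorem compCLM_apply {n : ℕ} {F : Type*} [NormedAddCommGroup F] [NormedSpace ℝ F]
    (f : (Fin n → F) →L[ℝ] ℝ) (t : Fin n) (v : F) :
    compCLM f t v = f (Pi.single t v) := rfl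

theorem clm_sum_components {n : ℕ} {F : Type*} [NormedAddCommGroup F] [NormedSpace ℝ F]
    (f : (Fin n → F) →L[ℝ] ℝ) (k : Fin n → F) :
    f k = ∑ t, compCLM f t (k t) := by
  conv_lhs => rw [← Finset.univ_sum_single k]
  rw [map_sum]
  rfl

end Dual

variable {Ω : Type*} {m0 : MeasurableSpace Ω} {T : ℕ} {J : Type*} [Fintype J]

/-- A convex cost process: `S t · ω` is convex, lsc, vanishes at `0`, never `-∞`, and
`S t` is `B(ℝ^J) ⊗ ℱ t`-measurable. -/
structure CostProcess (ℱ : Filtration (Fin (T + 1)) m0) (J : Type*) [Fintype J] where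
  S : Fin (T + 1) → (J → ℝ) → Ω → EReal
  ne_bot : ∀ t x ω, S t x ω ≠ ⊥
  convex : ∀ t ω (x y : J → ℝ) (a b : ℝ), 0 ≤ a → 0 ≤ b → a + b = 1 →
    S t (a • x + b • y) ω ≤ (a : EReal) * S t x ω + (b : EReal) * S t y ω
  lsc : ∀ t ω, LowerSemicontinuous fun x => S t x ω
  zero : ∀ t ω, S t 0 ω = 0
  meas : ∀ t, Measurable[(inferInstance : MeasurableSpace (J → ℝ)).prod (ℱ t)]
    fun p : (J → ℝ) × Ω => S t p.1 p.2

/-- A convex portfolio constraint process: each `D t ω` is closed, convex, contains `0`,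
and `ω ↦ D t ω` is `ℱ t`-measurable. -/
structure ConstraintProcess (ℱ : Filtration (Fin (T + 1)) m0) (J : Type*) [Fintype J] where
  D : Fin (T + 1) → Ω → Set (J → ℝ)
  closed : ∀ t ω, IsClosed (D t ω)
  convex : ∀ t ω, Convex ℝ (D t ω)
  zero_mem : ∀ t ω, (0 : J → ℝ) ∈ D t ω
  meas : ∀ t (U : Set (J → ℝ)), IsOpen U →
    MeasurableSet[ℱ t] {ω | (D t ω ∩ U).Nonempty}

/-- The set `M` of adapted claim processes. -/
def ClaimM (ℱ : Filtration (Fin (T + 1)) m0) : Set (Fin (T + 1) → Ω → ℝ) :=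
  {c | Adapted ℱ c}

/-- The set `M₋` of almost surely nonpositive claim processes. -/
def Mminus (P : Measure Ω) (ℱ : Filtration (Fin (T + 1)) m0) :
    Set (Fin (T + 1) → Ω → ℝ) :=
  {c | c ∈ ClaimM ℱ ∧ ∀ t, ∀ᵐ ω ∂P, c t ω ≤ 0}

/-- The set `C` of claim processes superhedgeable with zero cost. -/
def Cset (P : Measure Ω) (ℱ : Filtration (Fin (T + 1)) m0)
    (S : CostProcess ℱ J) (D : ConstraintProcess ℱ J) :
    Set (Fin (T + 1) → Ω → ℝ) :=
  {c | c ∈ ClaimM ℱ ∧ ∃ x : Fin (T + 1) → Ω → (J → ℝ), Adapted ℱ x ∧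
    x (Fin.last T) = 0 ∧
    ∀ᵐ ω ∂P, ∀ t, x t ω ∈ D.D t ω ∧
      S.S t (x t ω - prevP x t ω) ω + (c t ω : EReal) ≤ 0}

/-- The set `M¹` of integrable claim processes. -/
def M1 (P : Measure Ω) (ℱ : Filtration (Fin (T + 1)) m0) :
    Set (Fin (T + 1) → Ω → ℝ) :=
  {c | c ∈ ClaimM ℱ ∧ ∀ t, Integrable (c t) P}

/-- The set `M^∞` of essentially bounded claim processes. -/
def Minf (P : Measure Ω) (ℱ : Filtration (Fin (T + 1)) m0) :
    Set (Fin (T + 1) → Ω → ℝ) :=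
  {c | c ∈ ClaimM ℱ ∧ ∀ t, MemLp (c t) ⊤ P}

/-- The bilinear pairing `E ∑ₜ cₜ yₜ`. -/
def pairing (P : Measure Ω) (c y : Fin (T + 1) → Ω → ℝ) : ℝ :=
  ∫ ω, ∑ t, c t ω * y t ω ∂P

/-- The support function `σ_{C¹}(y) = sup_{c ∈ C¹} E ∑ₜ cₜ yₜ` of a set of integrable
claim processes. -/
def sigmaSup (P : Measure Ω) (A : Set (Fin (T + 1) → Ω → ℝ))
    (y : Fin (T + 1) → Ω → ℝ) : EReal :=
  sSup ((fun c => ((pairing P c y : ℝ) : EReal)) '' A)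

/-- `A` is closed in probability (within the space `M` of adapted claim processes). -/
def ClosedInProb (P : Measure Ω) (ℱ : Filtration (Fin (T + 1)) m0)
    (A : Set (Fin (T + 1) → Ω → ℝ)) : Prop :=
  ∀ cs : ℕ → Fin (T + 1) → Ω → ℝ, (∀ n, cs n ∈ A) →
    ∀ c ∈ ClaimM ℱ, (∀ t, TendstoInMeasure P (fun n => cs n t) atTop (c t)) → c ∈ A

section Aux
variable (P : Measure Ω) [IsProbabilityMeasure P] (ℱ : Filtration (Fin (T + 1)) m0)
  (S : CostProcess ℱ J) (D : ConstraintProcess ℱ J)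



/-- The image of `C ∩ M¹` in `L¹` is closed. -/
theorem Kset_closed
    (hcomp : ∀ (t : Fin (T + 1)) (s : Set Ω), P s = 0 → MeasurableSet[ℱ t] s)
    (hcl : ClosedInProb P ℱ (Cset P ℱ S D)) :
    IsClosed {k : Fin (T + 1) → Lp ℝ 1 P |
      ∃ c' ∈ Cset P ℱ S D ∩ M1 P ℱ, ∀ t, (k t : Ω → ℝ) =ᵐ[P] c' t} := by
  refine IsSeqClosed.isClosed ?_
  intro ks k hks hlim
  choose cs hcsC hcs_ae using hks
  have hmeas : ∀ t, TendstoInMeasure P (fun n => cs n t) atTop (k t : Ω → ℝ) := by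
    intro t
    have htend : Tendsto (fun n => ks n t) atTop (𝓝 (k t)) :=
      ((continuous_apply t).tendsto k).comp hlim
    have := tendstoInMeasure_of_tendsto_Lp (μ := P) htend
    exact this.congr (fun n => hcs_ae n t) EventuallyEq.rfl
  have key : ∀ t : Fin (T + 1), ∃ ct : Ω → ℝ,
      StronglyMeasurable[ℱ t] ct ∧ ct =ᵐ[P] (k t : Ω → ℝ) := by
    intro t
    obtain ⟨ns, _, hae⟩ := (hmeas t).exists_seq_tendsto_ae
    set N : Set Ω := {ω | ¬ Tendsto (fun i => cs (ns i) t ω) atTop (𝓝 ((k t : Ω → ℝ) ω))}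
      with hN
    have hN0 : P N = 0 := by
      rw [hN]; exact ae_iff.mp hae
    have hNm : MeasurableSet[ℱ t] N := hcomp t N hN0
    classical
    refine ⟨fun ω => if ω ∈ N then 0 else (k t : Ω → ℝ) ω, ?_, ?_⟩
    · refine stronglyMeasurable_of_tendsto (u := atTop)
        (f := fun i ω => if ω ∈ N then 0 else cs (ns i) t ω) ?_ ?_
      · intro i
        exact StronglyMeasurable.ite hNm stronglyMeasurable_const
          ((hcsC (ns i)).1.1 t).stronglyMeasurable
      · rw [tendsto_pi_nhds]
        intro ω
        by_cases hω : ω ∈ N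
        · simp only [if_pos hω]; exact tendsto_const_nhds
        · simp only [if_neg hω]
          exact not_not.mp hω
    · have hsub : {ω | (if ω ∈ N then 0 else (k t : Ω → ℝ) ω) ≠ (k t : Ω → ℝ) ω} ⊆ N := by
        intro ω hω
        by_contra hmem
        exact hω (if_neg hmem)
      exact measure_mono_null hsub hN0
  choose clim hclim_meas hclim_ae using key
  have hclimM : clim ∈ ClaimM ℱ := fun t => (hclim_meas t).measurable
  have hclim_C : clim ∈ Cset P ℱ S D := by
    refine hcl cs (fun n => (hcsC n).1) clim hclimM ?_
    intro t
    exact (hmeas t).congr (fun _ => EventuallyEq.rfl) (hclim_ae t).symm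
  refine ⟨clim, ⟨hclim_C, hclimM, ?_⟩, fun t => (hclim_ae t).symm⟩
  intro t
  exact (L1.integrable_coeFn (k t)).congr (hclim_ae t).symm

/-- `Cset` is convex. -/
theorem Cset_convex :
    ∀ c₁ ∈ Cset P ℱ S D, ∀ c₂ ∈ Cset P ℱ S D, ∀ a b : ℝ, 0 ≤ a → 0 ≤ b → a + b = 1 →
      a • c₁ + b • c₂ ∈ Cset P ℱ S D := by
  rintro c₁ ⟨had₁, x₁, hx₁ad, hx₁T, hae₁⟩ c₂ ⟨had₂, x₂, hx₂ad, hx₂T, hae₂⟩ a b ha hb hab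
  refine ⟨fun t => ((had₁ t).const_smul a).add ((had₂ t).const_smul b),
    fun t => a • x₁ t + b • x₂ t,
    fun t => ((hx₁ad t).const_smul a).add ((hx₂ad t).const_smul b), ?_, ?_⟩
  · show a • x₁ (Fin.last T) + b • x₂ (Fin.last T) = 0
    rw [hx₁T, hx₂T]; simp
  · filter_upwards [hae₁, hae₂] with ω h₁ h₂
    intro t
    have hprev : prevP (fun t => a • x₁ t + b • x₂ t) t ω
        = a • prevP x₁ t ω + b • prevP x₂ t ω := by
      unfold prevP
      split_ifs with h
      · simp
      · rfl
    constructor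
    · exact D.convex t ω (h₁ t).1 (h₂ t).1 ha hb hab
    · set u₁ := x₁ t ω - prevP x₁ t ω with hu₁
      set u₂ := x₂ t ω - prevP x₂ t ω with hu₂
      have hcomb : (fun s => a • x₁ s + b • x₂ s) t ω
          - prevP (fun s => a • x₁ s + b • x₂ s) t ω = a • u₁ + b • u₂ := by
        simp only [Pi.add_apply, Pi.smul_apply]
        rw [hprev, hu₁, hu₂, smul_sub, smul_sub]
        abel
      have hS₁ := (h₁ t).2
      have hS₂ := (h₂ t).2
      have hne₁t : S.S t u₁ ω ≠ ⊤ := by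
        intro h
        rw [← hu₁] at hS₁
        rw [h] at hS₁
        simp [EReal.top_add_coe] at hS₁
      have hne₂t : S.S t u₂ ω ≠ ⊤ := by
        intro h
        rw [← hu₂] at hS₂
        rw [h] at hS₂
        simp [EReal.top_add_coe] at hS₂
      set s₁ := (S.S t u₁ ω).toReal with hs₁def
      set s₂ := (S.S t u₂ ω).toReal with hs₂def
      have hs₁ : (s₁ : EReal) = S.S t u₁ ω := EReal.coe_toReal hne₁t (S.ne_bot t u₁ ω)
      have hs₂ : (s₂ : EReal) = S.S t u₂ ω := EReal.coe_toReal hne₂t (S.ne_bot t u₂ ω)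
      have hr₁ : s₁ + c₁ t ω ≤ 0 := by
        rw [← hu₁, ← hs₁] at hS₁
        exact_mod_cast hS₁
      have hr₂ : s₂ + c₂ t ω ≤ 0 := by
        rw [← hu₂, ← hs₂] at hS₂
        exact_mod_cast hS₂
      have hconv := S.convex t ω u₁ u₂ a b ha hb hab
      rw [← hs₁, ← hs₂] at hconv
      have hconv' : S.S t (a • u₁ + b • u₂) ω ≤ ((a * s₁ + b * s₂ : ℝ) : EReal) := by
        refine hconv.trans (le_of_eq ?_)
        rw [EReal.coe_add, EReal.coe_mul, EReal.coe_mul]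
      have hclaim : ((a • c₁ + b • c₂) t ω : ℝ) = a * c₁ t ω + b * c₂ t ω := rfl
      calc S.S t ((fun s => a • x₁ s + b • x₂ s) t ω
              - prevP (fun s => a • x₁ s + b • x₂ s) t ω) ω
            + ((a • c₁ + b • c₂) t ω : EReal)
          ≤ ((a * s₁ + b * s₂ : ℝ) : EReal) + ((a * c₁ t ω + b * c₂ t ω : ℝ) : EReal) := by
            rw [hcomb, hclaim]
            exact add_le_add hconv' le_rfl
        _ = ((a * (s₁ + c₁ t ω) + b * (s₂ + c₂ t ω) : ℝ) : EReal) := by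
            rw [← EReal.coe_add]
            norm_cast
            ring
        _ ≤ ((0 : ℝ) : EReal) := by
            exact_mod_cast (by nlinarith : a * (s₁ + c₁ t ω) + b * (s₂ + c₂ t ω) ≤ (0:ℝ))
        _ = 0 := rfl
end Aux

/-- Corollary 6, part 1: if `C` is a cone closed in probability, then an
integrable claim process belongs to `C` iff `E ∑ₜ cₜ yₜ ≤ 0` for every `y` in the polar cone
`D^∞` of `C¹`. -/
theorem mem_Cset_iff_pairing_nonpos_of_cone
    (P : Measure Ω) [IsProbabilityMeasure P] (ℱ : Filtration (Fin (T + 1)) m0)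
    (hcomp : ∀ (t : Fin (T + 1)) (s : Set Ω), P s = 0 → MeasurableSet[ℱ t] s)
    (S : CostProcess ℱ J) (D : ConstraintProcess ℱ J)
    (hcone : ∀ c ∈ Cset P ℱ S D, ∀ α : ℝ, 0 < α → α • c ∈ Cset P ℱ S D)
    (hcl : ClosedInProb P ℱ (Cset P ℱ S D)) :
    ∀ c ∈ M1 P ℱ, (c ∈ Cset P ℱ S D ↔
      ∀ y ∈ {y ∈ Minf P ℱ | ∀ c' ∈ Cset P ℱ S D ∩ M1 P ℱ, pairing P c' y ≤ 0},
        pairing P c y ≤ 0) := by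
  intro c hc
  constructor
  · intro hcC y hy
    exact hy.2 c ⟨hcC, hc⟩
  · intro hpol
    by_contra hcC
    classical
    set K : Set (Fin (T + 1) → Lp ℝ 1 P) :=
      {k | ∃ c' ∈ Cset P ℱ S D ∩ M1 P ℱ, ∀ t, (k t : Ω → ℝ) =ᵐ[P] c' t} with hK
    set kc : Fin (T + 1) → Lp ℝ 1 P := fun t => (hc.2 t).toL1 (c t) with hkc
    -- `0 ∈ K`
    have h0C : (0 : Fin (T + 1) → Ω → ℝ) ∈ Cset P ℱ S D := by
      refine ⟨fun t => measurable_const, fun _ => 0,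
        fun t => measurable_const, rfl, ?_⟩
      refine Eventually.of_forall (fun ω t => ?_)
      constructor
      · exact D.zero_mem t ω
      · have hp : prevP (fun _ : Fin (T + 1) => (0 : Ω → J → ℝ)) t ω = 0 := by
          unfold prevP
          split_ifs <;> rfl
        simp [hp, S.zero t ω]
    have h0K : (0 : Fin (T + 1) → Lp ℝ 1 P) ∈ K := by
      refine ⟨0, ⟨h0C, fun t => measurable_const,
        fun t => integrable_zero _ _ _⟩, fun t => ?_⟩
      exact Lp.coeFn_zero ℝ 1 P
    -- `K` is convex
    have hKconv : Convex ℝ K := by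
      intro k₁ hk₁ k₂ hk₂ a b ha hb hab
      obtain ⟨c₁, ⟨hc₁C, hc₁M⟩, h₁⟩ := hk₁
      obtain ⟨c₂, ⟨hc₂C, hc₂M⟩, h₂⟩ := hk₂
      refine ⟨a • c₁ + b • c₂,
        ⟨Cset_convex P ℱ S D c₁ hc₁C c₂ hc₂C a b ha hb hab,
         fun t => ((hc₁M.1 t).const_smul a).add ((hc₂M.1 t).const_smul b),
         fun t => ((hc₁M.2 t).smul a).add ((hc₂M.2 t).smul b)⟩, ?_⟩
      intro t
      filter_upwards [Lp.coeFn_add (a • k₁ t) (b • k₂ t), Lp.coeFn_smul a (k₁ t),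
        Lp.coeFn_smul b (k₂ t), h₁ t, h₂ t] with ω e1 e2 e3 e4 e5
      show ((a • k₁ t + b • k₂ t : Lp ℝ 1 P) : Ω → ℝ) ω = a * c₁ t ω + b * c₂ t ω
      rw [e1, Pi.add_apply, e2, e3, Pi.smul_apply, Pi.smul_apply, e4, e5,
        smul_eq_mul, smul_eq_mul]
    -- `K` is a cone
    have hKcone : ∀ k ∈ K, ∀ α : ℝ, 0 < α → α • k ∈ K := by
      intro k hk α hα
      obtain ⟨c', ⟨h1, h2⟩, h3⟩ := hk
      refine ⟨α • c', ⟨hcone c' h1 α hα,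
        fun t => (h2.1 t).const_smul α, fun t => (h2.2 t).smul α⟩, ?_⟩
      intro t
      filter_upwards [Lp.coeFn_smul α (k t), h3 t] with ω e1 e2
      show ((α • k t : Lp ℝ 1 P) : Ω → ℝ) ω = α * c' t ω
      rw [e1, Pi.smul_apply, e2, smul_eq_mul]
    have hKclosed : IsClosed K := Kset_closed P ℱ S D hcomp hcl
    -- the image of `c` is not in `K`
    have hkcK : kc ∉ K := by
      intro hmem
      obtain ⟨c', ⟨h1C, h1M⟩, h3⟩ := hmem
      apply hcC
      refine hcl (fun _ => c') (fun _ => h1C) c hc.1 (fun t => ?_)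
      have he : c' t =ᵐ[P] c t := ((h3 t).symm.trans ((hc.2 t).coeFn_toL1))
      exact (tendstoInMeasure_const (c' t)).congr_right he
    -- separation
    obtain ⟨f, u, hfK, hfc⟩ := geometric_hahn_banach_closed_point hKconv hKclosed hkcK
    have hu0 : 0 < u := by
      have := hfK 0 h0K
      simpa using this
    have hfK0 : ∀ k ∈ K, f k ≤ 0 := by
      intro k hk
      by_contra hpos
      push_neg at hpos
      have hα : 0 < (u + 1) / f k := div_pos (by linarith) hpos
      have h2 := hfK _ (hKcone k hk _ hα)
      rw [_root_.map_smul, smul_eq_mul, div_mul_cancel₀ _ (ne_of_gt hpos)] at h2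
      linarith
    -- represent the components of `f` by bounded measurable functions
    have hrep := fun t : Fin (T + 1) => l1_dual_repr P (compCLM f t)
    choose y hym hyb hyap using hrep
    set Cb : Fin (T + 1) → ℝ := fun t => ‖compCLM f t‖ + 1 with hCb
    have hCb0 : ∀ t, 0 ≤ Cb t := fun t => by positivity
    set Y : Fin (T + 1) → Ω → ℝ := fun t => P[y t | ℱ t] with hY
    have hYb : ∀ t, ∀ᵐ ω ∂P, |Y t ω| ≤ Cb t := by
      intro t
      have h1 : ∀ᵐ ω ∂P, |y t ω| ≤ ((Cb t).toNNReal : ℝ) := by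
        refine Eventually.of_forall (fun ω => ?_)
        rw [Real.coe_toNNReal _ (hCb0 t)]
        exact hyb t ω
      have h2 := ae_bdd_condExp_of_ae_bdd (m := ℱ t) (μ := P) h1
      simp only [hY]
      refine h2.mono (fun ω hω => ?_)
      rwa [Real.coe_toNNReal _ (hCb0 t)] at hω
    have hYMinf : Y ∈ Minf P ℱ := by
      refine ⟨fun t => stronglyMeasurable_condExp.measurable, fun t => ?_⟩
      refine memLp_top_of_bound
        ((stronglyMeasurable_condExp.mono (ℱ.le t)).aestronglyMeasurable) (Cb t) ?_
      refine (hYb t).mono (fun ω hω => ?_)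
      rwa [Real.norm_eq_abs]
    -- pairing against `Y` equals evaluating `f`
    have hpairf : ∀ (c' : Fin (T + 1) → Ω → ℝ), (∀ t, StronglyMeasurable[ℱ t] (c' t)) →
        ∀ (hint : ∀ t, Integrable (c' t) P),
        pairing P c' Y = f (fun t => (hint t).toL1 (c' t)) := by
      intro c' hadp hint
      have hterm : ∀ t, Integrable (fun ω => c' t ω * Y t ω) P := by
        intro t
        have := Integrable.bdd_mul (c := Cb t) (hint t)
          ((stronglyMeasurable_condExp.mono (ℱ.le t)).aestronglyMeasurable)
          ((hYb t).mono fun ω hω => by rwa [Real.norm_eq_abs])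
        exact this.congr (Eventually.of_forall fun ω => mul_comm _ _)
      have hstep : ∀ t, ∫ ω, c' t ω * Y t ω ∂P = compCLM f t ((hint t).toL1 (c' t)) := by
        intro t
        have hcond : ∫ ω, c' t ω * (P[y t | ℱ t]) ω ∂P = ∫ ω, c' t ω * y t ω ∂P :=
          integral_mul_condexp_eq P (ℱ.le t) (hadp t) (hint t)
            (hym t).aestronglyMeasurable (Cb := Cb t)
            (Eventually.of_forall fun ω => by rw [Real.norm_eq_abs]; exact hyb t ω)
        simp only [hY]
        rw [hcond]
        exact (hyap t (c' t) (hint t)).symm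
      rw [pairing, integral_finset_sum _ (fun t _ => hterm t),
        Finset.sum_congr rfl (fun t _ => hstep t), ← clm_sum_components]
    -- `Y` lies in the polar cone
    have hYpolar : ∀ c' ∈ Cset P ℱ S D ∩ M1 P ℱ, pairing P c' Y ≤ 0 := by
      intro c' hc'
      rw [hpairf c' (fun t => (hc'.2.1 t).stronglyMeasurable) (fun t => hc'.2.2 t)]
      exact hfK0 _ ⟨c', hc', fun t => Integrable.coeFn_toL1 _⟩
    have hfinal := hpol Y ⟨hYMinf, hYpolar⟩
    have hpc : pairing P c Y = f kc := hpairf c (fun t => (hc.1 t).stronglyMeasurable) (fun t => hc.2 t)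
    rw [hpc] at hfinal
    linarith
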